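/- arXiv:2509.10118 — 5 statements merged into one kernel-verified Lean document; each statement's English description precedes it below -/
import Mathlib

section
/- Suppose an interconnected system admits, for some ε ∈ (0,1), ψ ≥ 0, class-𝒦_∞ functions α1, α2, nonnegative gains Γ = {γ_{i,j}}_{i∈𝒩, j∈ℰ_i∪{i}} with max_{i∈𝒩} Σ_{j∈ℰ_i∪{i}} γ_{i,j} ≤ 1−ε, and functions V_i : ℝ^{n_i} → [0,∞) such that (i) α1(|x|₂) ≤ V_i(x) ≤ α2(|x|₂) for all x ∈ ℝ^{n_i} and all i ∈ 𝒩, and (ii) every trajectory satisfies V_i(x_{i,k+1}) ≤ Σ_{j∈ℰ_i∪{i}} γ_{i,j} V_j(x_{j,k}) + ψ|d_{i,k}|₂ for all i ∈ 𝒩 and k ∈ ℕ. Then the system is scalably input-to-state stable; in fact the sISS estimate holds with β(s,k) = α1⁻¹(2(1−ε)^k α2(s)) and μ(r) = α1⁻¹((2/ε)ψ r). -/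
open scoped NNReal
open Filter

noncomputable section

/-- `ℝ^m` with the Euclidean norm. -/
abbrev Evec (m : ℕ) : Type := EuclideanSpace ℝ (Fin m)

/-- A class-𝒦 function: continuous, strictly increasing, vanishing at `0`. -/
def IsClassK (α : ℝ≥0 → ℝ≥0) : Prop :=
  Continuous α ∧ StrictMono α ∧ α 0 = 0

/-- A class-𝒦∞ function: class 𝒦 and unbounded. -/
def IsClassKInfty (α : ℝ≥0 → ℝ≥0) : Prop :=
  IsClassK α ∧ Tendsto α atTop atTop

/-- A class-𝒦ℒ function: class 𝒦 in the first argument, decreasing to `0` in the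
second. -/
def IsClassKL (β : ℝ≥0 → ℕ → ℝ≥0) : Prop :=
  (∀ k : ℕ, IsClassK fun s => β s k) ∧
    ∀ s : ℝ≥0, Tendsto (fun k => β s k) atTop (nhds 0)

lemma classKInfty_surjective {α : ℝ≥0 → ℝ≥0} (h : IsClassKInfty α) :
    Function.Surjective α := by
  obtain ⟨⟨hc, hm, h0⟩, ht⟩ := h
  intro y
  obtain ⟨x, hx⟩ := (ht.eventually_ge_atTop y).exists
  have hy : y ∈ Set.Icc (α 0) (α x) := ⟨by rw [h0]; exact zero_le, hx⟩
  obtain ⟨z, _, hz⟩ := intermediate_value_Icc (zero_le : (0:ℝ≥0) ≤ x) hc.continuousOn hy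
  exact ⟨z, hz⟩

/-- **Discrete-time sISS vector Lyapunov function theorem.** An interconnected system
over a finite agent set `ι` with neighbor sets `nbr i`, states in `ℝ^(n i)`,
disturbances in `ℝ^(p i)` and dynamics `f`, admitting a vector Lyapunov function `V`
with class-𝒦∞ sandwich bounds `α₁, α₂`, small-gain row sums at most `1 - ε`, and the
decremental inequality along every trajectory, is scalably input-to-state stable;
in fact the sISS estimate holds with `β s k = α₁⁻¹ (2 (1-ε)^k α₂ s)` and
`μ r = α₁⁻¹ ((2/ε) ψ r)`. -/
theorem sISS_of_vector_lyapunov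
    {ι : Type} [Fintype ι] [Nonempty ι] [DecidableEq ι]
    (n p : ι → ℕ) (nbr : ι → Finset ι)
    (f : ∀ i : ι, (∀ j : ι, Evec (n j)) → Evec (p i) → Evec (n i))
    (ε : ℝ≥0) (hε0 : 0 < ε) (hε1 : ε < 1) (ψ : ℝ≥0)
    (α₁ α₂ : ℝ≥0 → ℝ≥0) (hα₁ : IsClassKInfty α₁) (hα₂ : IsClassKInfty α₂)
    (γ : ι → ι → ℝ≥0)
    (hsg : ∀ i : ι, ∑ j ∈ insert i (nbr i), γ i j ≤ 1 - ε)
    (V : ∀ i : ι, Evec (n i) → ℝ≥0)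
    (hsandwich : ∀ (i : ι) (x : Evec (n i)), α₁ ‖x‖₊ ≤ V i x ∧ V i x ≤ α₂ ‖x‖₊)
    (hdec : ∀ (x : ℕ → ∀ j : ι, Evec (n j)) (d : ℕ → ∀ i : ι, Evec (p i)),
      (∀ (k : ℕ) (i : ι), x (k + 1) i = f i (x k) (d k i)) →
      ∀ (k : ℕ) (i : ι),
        V i (x (k + 1) i) ≤
          ∑ j ∈ insert i (nbr i), γ i j * V j (x k j) + ψ * ‖d k i‖₊) :
    -- the sISS estimate holds with the explicit `β` and `μ`
    (∀ (x : ℕ → ∀ j : ι, Evec (n j)) (d : ℕ → ∀ i : ι, Evec (p i)),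
      (∀ (k : ℕ) (i : ι), x (k + 1) i = f i (x k) (d k i)) →
      ∀ C : ℝ≥0, (∀ (k : ℕ) (i : ι), ‖d k i‖₊ ≤ C) →
      ∀ (k : ℕ) (i : ι),
        ‖x k i‖₊ ≤
          Function.invFun α₁
              (2 * (1 - ε) ^ k * α₂ (Finset.univ.sup fun j => ‖x 0 j‖₊)) +
            Function.invFun α₁ (2 / ε * ψ * C)) ∧
    -- the system is scalably input-to-state stable
    (∃ β : ℝ≥0 → ℕ → ℝ≥0, ∃ μ : ℝ≥0 → ℝ≥0, IsClassKL β ∧ IsClassK μ ∧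
      ∀ (x : ℕ → ∀ j : ι, Evec (n j)) (d : ℕ → ∀ i : ι, Evec (p i)),
        (∀ (k : ℕ) (i : ι), x (k + 1) i = f i (x k) (d k i)) →
        ∀ C : ℝ≥0, (∀ (k : ℕ) (i : ι), ‖d k i‖₊ ≤ C) →
        ∀ (k : ℕ) (i : ι),
          ‖x k i‖₊ ≤ β (Finset.univ.sup fun j => ‖x 0 j‖₊) k + μ C) := by
  obtain ⟨⟨hα₁c, hα₁m, hα₁0⟩, hα₁t⟩ := hα₁
  obtain ⟨⟨hα₂c, hα₂m, hα₂0⟩, hα₂t⟩ := hα₂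
  have hsurj : Function.Surjective α₁ :=
    classKInfty_surjective ⟨⟨hα₁c, hα₁m, hα₁0⟩, hα₁t⟩
  set e : ℝ≥0 ≃o ℝ≥0 := StrictMono.orderIsoOfSurjective α₁ hα₁m hsurj with he
  have hecoe : ∀ z, e z = α₁ z := fun z => rfl
  set Φ : ℝ≥0 → ℝ≥0 := Function.invFun α₁ with hΦdef
  have hΦe : Φ = ⇑e.symm := by
    funext y
    apply hα₁m.injective
    rw [hΦdef, Function.invFun_eq (hsurj y), ← hecoe, e.apply_symm_apply]
  have hΦmono : Monotone Φ := by rw [hΦe]; exact e.symm.monotone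
  have hΦsm : StrictMono Φ := by rw [hΦe]; exact e.symm.strictMono
  have hΦα : ∀ z, Φ (α₁ z) = z := by
    intro z; rw [hΦe, ← hecoe, e.symm_apply_apply]
  have hΦ0 : Φ 0 = 0 := by have := hΦα 0; rwa [hα₁0] at this
  have hΦc : Continuous Φ := by rw [hΦe]; exact e.toHomeomorph.symm.continuous
  have h1ε0 : (0 : ℝ≥0) < 1 - ε := tsub_pos_of_lt hε1
  have h1ε1 : (1 - ε : ℝ≥0) < 1 := tsub_lt_self one_pos hε0
  -- main Lyapunov bound
  have key : ∀ (x : ℕ → ∀ j : ι, Evec (n j)) (d : ℕ → ∀ i : ι, Evec (p i)),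
      (∀ (k : ℕ) (i : ι), x (k + 1) i = f i (x k) (d k i)) →
      ∀ C : ℝ≥0, (∀ (k : ℕ) (i : ι), ‖d k i‖₊ ≤ C) →
      ∀ (k : ℕ) (i : ι),
        ‖x k i‖₊ ≤
          Φ (2 * (1 - ε) ^ k * α₂ (Finset.univ.sup fun j => ‖x 0 j‖₊)) +
            Φ (2 / ε * ψ * C) := by
    intro x d htraj C hC k i
    set M : ℝ≥0 := Finset.univ.sup fun j => ‖x 0 j‖₊ with hM
    set W : ℕ → ℝ≥0 := fun k => Finset.univ.sup fun i => V i (x k i) with hW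
    have hstep : ∀ k, W (k + 1) ≤ (1 - ε) * W k + ψ * C := by
      intro k
      refine Finset.sup_le fun i _ => ?_
      calc V i (x (k + 1) i)
          ≤ ∑ j ∈ insert i (nbr i), γ i j * V j (x k j) + ψ * ‖d k i‖₊ :=
            hdec x d htraj k i
        _ ≤ ∑ j ∈ insert i (nbr i), γ i j * W k + ψ * C := by
            refine add_le_add (Finset.sum_le_sum fun j _ => ?_)
              (mul_le_mul_right (hC k i) ψ)
            exact mul_le_mul_right (Finset.le_sup (f := fun i => V i (x k i)) (Finset.mem_univ j)) _
        _ = (∑ j ∈ insert i (nbr i), γ i j) * W k + ψ * C := by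
            rw [Finset.sum_mul]
        _ ≤ (1 - ε) * W k + ψ * C :=
            add_le_add_left (mul_le_mul_left (hsg i) _) _
    have hgeom : ∀ k, W k ≤ (1 - ε) ^ k * W 0 + ψ * C / ε := by
      intro k
      induction k with
      | zero => simp
      | succ k ih =>
        calc W (k + 1) ≤ (1 - ε) * W k + ψ * C := hstep k
          _ ≤ (1 - ε) * ((1 - ε) ^ k * W 0 + ψ * C / ε) + ψ * C :=
            add_le_add_left (mul_le_mul_right ih _) _
          _ = (1 - ε) ^ (k + 1) * W 0 + ((1 - ε) * (ψ * C / ε) + ψ * C) := by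
            ring
          _ = (1 - ε) ^ (k + 1) * W 0 + ψ * C / ε := by
            congr 1
            calc (1 - ε) * (ψ * C / ε) + ψ * C
                = (1 - ε) * (ψ * C / ε) + ε * (ψ * C / ε) := by
                  rw [mul_comm ε, div_mul_cancel₀ _ hε0.ne']
              _ = ((1 - ε) + ε) * (ψ * C / ε) := (add_mul _ _ _).symm
              _ = ψ * C / ε := by
                  rw [tsub_add_cancel_of_le hε1.le, one_mul]
    have hW0 : W 0 ≤ α₂ M := by
      refine Finset.sup_le fun j _ => ?_
      exact (hsandwich j (x 0 j)).2.trans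
        (hα₂m.monotone (Finset.le_sup (f := fun j => ‖x 0 j‖₊) (Finset.mem_univ j)))
    have hVk : α₁ ‖x k i‖₊ ≤ (1 - ε) ^ k * α₂ M + ψ * C / ε := by
      calc α₁ ‖x k i‖₊ ≤ V i (x k i) := (hsandwich i (x k i)).1
        _ ≤ W k := Finset.le_sup (f := fun i => V i (x k i)) (Finset.mem_univ i)
        _ ≤ (1 - ε) ^ k * W 0 + ψ * C / ε := hgeom k
        _ ≤ (1 - ε) ^ k * α₂ M + ψ * C / ε :=
          add_le_add_left (mul_le_mul_right hW0 _) _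
    set A : ℝ≥0 := (1 - ε) ^ k * α₂ M with hA
    set B : ℝ≥0 := ψ * C / ε with hB
    have hmax : A + B ≤ max (2 * A) (2 * B) := by
      rcases le_total A B with h | h
      · calc A + B ≤ B + B := add_le_add_left h B
          _ = 2 * B := (two_mul B).symm
          _ ≤ _ := le_max_right _ _
      · calc A + B ≤ A + A := add_le_add_right h A
          _ = 2 * A := (two_mul A).symm
          _ ≤ _ := le_max_left _ _
    have h2B : 2 / ε * ψ * C = 2 * B := by
      rw [hB]; field_simp
    calc ‖x k i‖₊ = Φ (α₁ ‖x k i‖₊) := (hΦα _).symm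
      _ ≤ Φ (A + B) := hΦmono hVk
      _ ≤ Φ (max (2 * A) (2 * B)) := hΦmono hmax
      _ = max (Φ (2 * A)) (Φ (2 * B)) := hΦmono.map_max
      _ ≤ Φ (2 * A) + Φ (2 * B) := max_le le_self_add le_add_self
      _ = Φ (2 * (1 - ε) ^ k * α₂ M) + Φ (2 / ε * ψ * C) := by
        rw [h2B, hA, mul_assoc]
  refine ⟨key, ?_⟩
  refine ⟨fun s k => Φ (2 * (1 - ε) ^ k * α₂ s),
    fun r => Φ (2 / ε * ψ * r) + r, ⟨?_, ?_⟩, ⟨?_, ?_, ?_⟩, ?_⟩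
  · intro k
    have hc : (0 : ℝ≥0) < 2 * (1 - ε) ^ k := by positivity
    refine ⟨hΦc.comp (continuous_const.mul hα₂c), ?_, ?_⟩
    · intro a b hab
      have h2 : (2 * (1 - ε) ^ k) * α₂ a < (2 * (1 - ε) ^ k) * α₂ b :=
        mul_lt_mul_of_pos_left (hα₂m hab) hc
      exact hΦsm h2
    · simp [hα₂0, hΦ0]
  · intro s
    have h1 : Tendsto (fun k : ℕ => ((1 - ε : ℝ≥0)) ^ k) atTop (nhds 0) :=
      NNReal.tendsto_pow_atTop_nhds_zero_of_lt_one h1ε1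
    have h2 : Tendsto (fun k : ℕ => 2 * (1 - ε : ℝ≥0) ^ k * α₂ s) atTop (nhds 0) := by
      have := (h1.const_mul (2 : ℝ≥0)).mul_const (α₂ s)
      simpa using this
    have := (hΦc.tendsto 0).comp h2
    simpa [hΦ0, Function.comp_def] using this
  · exact ((hΦc.comp (continuous_const.mul continuous_id)).add continuous_id)
  · intro a b hab
    exact add_lt_add_of_le_of_lt (hΦmono (mul_le_mul_right hab.le _)) hab
  · simp [hΦ0]
  · intro x d htraj C hC k i
    exact (key x d htraj C hC k i).trans (add_le_add_right le_self_add _)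
end
end

section
/- Let ℬ ⊂ ℝ^p be the convex hull of finitely many parameter vectors {χ^ν}_{ν∈Ω}. Consider an interconnected system whose agent dynamics are affine in the parameter: x_{i,k+1}(χ) = f_i(x_{i,k}, {x_{j,k}}_{j∈ℰ_i}, d_{i,k}; χ) = Σ_{l=1}^p χ_l Φ_{i,l}(x_{i,k}, {x_{j,k}}_{j∈ℰ_i}, d_{i,k}), with each Φ_{i,l} independent of χ. Assume each V_i : ℝ^{n_i} → [0,∞) is convex and satisfies class-𝒦_∞ sandwich bounds α1(|x|₂) ≤ V_i(x) ≤ α2(|x|₂). Suppose there exist ψ ≥ 0 and nonnegative gains γ_{i,j} with max_{i∈𝒩} Σ_{j∈ℰ_i∪{i}} γ_{i,j} ≤ 1−ε for some ε ∈ (0,1), such that for every vertex χ^ν and all admissible states and disturbances, V_i(f_i(x_{i,k}, {x_{j,k}}_{j∈ℰ_i}, d_{i,k}; χ^ν)) ≤ Σ_{j∈ℰ_i∪{i}} γ_{i,j} V_j(x_{j,k}) + ψ|d_{i,k}|₂ for all i ∈ 𝒩. Then for every χ ∈ ℬ the same inequality holds, i.e. V_i(f_i(x_{i,k}, {x_{j,k}}_{j∈ℰ_i},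 d_{i,k}; χ)) ≤ Σ_{j∈ℰ_i∪{i}} γ_{i,j} V_j(x_{j,k}) + ψ|d_{i,k}|₂, and the parametrized interconnected system is scalably input-to-state stable for every χ ∈ ℬ. -/
open scoped NNReal
open Filter

noncomputable section

/-- **sISS with parameter-affine dynamics.** Let `ℬ ⊂ ℝ^P` be the convex hull of
finitely many parameter vectors `χv ν`, and let the dynamics be affine in the
parameter: `f χ i x d = Σ_l χ l • Φ i l x d` with `Φ` independent of `χ`. Assume each
`V i` is convex and satisfies class-𝒦∞ sandwich bounds, and that there are `ψ ≥ 0`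
and nonnegative gains with small-gain row sums at most `1 - ε` such that the
decremental condition holds at every vertex `χv ν` for all admissible states and
disturbances. Then for every `χ ∈ ℬ` the same vector Lyapunov functions satisfy the
decremental condition, and the parametrized interconnected system is scalably
input-to-state stable. -/
theorem sISS_parameter_affine_dynamics
    {ι : Type} [Fintype ι] [Nonempty ι] [DecidableEq ι]
    {Ω : Type} [Fintype Ω] [Nonempty Ω]
    (n p : ι → ℕ) (nbr : ι → Finset ι)
    (P : ℕ) (χv : Ω → (Fin P → ℝ))
    (Φ : ∀ i : ι, Fin P → (∀ j : ι, Evec (n j)) → Evec (p i) → Evec (n i))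
    (f : (Fin P → ℝ) → ∀ i : ι, (∀ j : ι, Evec (n j)) → Evec (p i) → Evec (n i))
    (haff : ∀ (χ : Fin P → ℝ) (i : ι) (x : ∀ j : ι, Evec (n j)) (d : Evec (p i)),
      f χ i x d = ∑ l : Fin P, χ l • Φ i l x d)
    (ε : ℝ≥0) (hε0 : 0 < ε) (hε1 : ε < 1) (ψ : ℝ≥0)
    (α₁ α₂ : ℝ≥0 → ℝ≥0) (hα₁ : IsClassKInfty α₁) (hα₂ : IsClassKInfty α₂)
    (γ : ι → ι → ℝ≥0)
    (hsg : ∀ i : ι, ∑ j ∈ insert i (nbr i), γ i j ≤ 1 - ε)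
    (V : ∀ i : ι, Evec (n i) → ℝ≥0)
    (hconv : ∀ i : ι, ConvexOn ℝ Set.univ fun x : Evec (n i) => (V i x : ℝ))
    (hsandwich : ∀ (i : ι) (x : Evec (n i)), α₁ ‖x‖₊ ≤ V i x ∧ V i x ≤ α₂ ‖x‖₊)
    (hvertex : ∀ (ν : Ω) (i : ι) (x : ∀ j : ι, Evec (n j)) (d : Evec (p i)),
      V i (f (χv ν) i x d) ≤ ∑ j ∈ insert i (nbr i), γ i j * V j (x j) + ψ * ‖d‖₊) :
    ∀ χ ∈ convexHull ℝ (Set.range χv),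
      -- the decremental condition holds throughout the hull …
      (∀ (i : ι) (x : ∀ j : ι, Evec (n j)) (d : Evec (p i)),
        V i (f χ i x d) ≤ ∑ j ∈ insert i (nbr i), γ i j * V j (x j) + ψ * ‖d‖₊) ∧
      -- … and the system with parameter `χ` is scalably input-to-state stable
      (∃ β : ℝ≥0 → ℕ → ℝ≥0, ∃ μ : ℝ≥0 → ℝ≥0, IsClassKL β ∧ IsClassK μ ∧
        ∀ (x : ℕ → ∀ j : ι, Evec (n j)) (d : ℕ → ∀ i : ι, Evec (p i)),
          (∀ (k : ℕ) (i : ι), x (k + 1) i = f χ i (x k) (d k i)) →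
          ∀ C : ℝ≥0, (∀ (k : ℕ) (i : ι), ‖d k i‖₊ ≤ C) →
          ∀ (k : ℕ) (i : ι),
            ‖x k i‖₊ ≤ β (Finset.univ.sup fun j => ‖x 0 j‖₊) k + μ C) := by
  -- unpack class-K∞ data
  obtain ⟨⟨hc1, hm1, h01⟩, ht1⟩ := hα₁
  obtain ⟨⟨hc2, hm2, h02⟩, _⟩ := hα₂
  -- the inverse of α₁
  have hsurj : Function.Surjective α₁ := by
    apply hc1.surjective ht1
    rw [show (atBot : Filter ℝ≥0) = pure ⊥ from OrderBot.atBot_eq _]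
    simp [bot_eq_zero, h01, tendsto_pure_pure]
  set e := StrictMono.orderIsoOfSurjective α₁ hm1 hsurj with he
  set g : ℝ≥0 → ℝ≥0 := fun t => e.symm t with hg
  have hginv : ∀ t, g (α₁ t) = t := fun t =>
    StrictMono.orderIsoOfSurjective_symm_apply_self α₁ hm1 hsurj t
  have hgmono : Monotone g := e.symm.monotone
  have hgstrict : StrictMono g := e.symm.strictMono
  have hgcont : Continuous g := (e.symm : ℝ≥0 ≃o ℝ≥0).continuous
  have hg0 : g 0 = 0 := by have := hginv 0; rwa [h01] at this
  -- constants
  set q : ℝ≥0 := 1 - ε with hqdef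
  have hq1 : q < 1 := tsub_lt_self zero_lt_one hε0
  have hq0 : 0 < q := tsub_pos_of_lt hε1
  have hqε : q + ε = 1 := tsub_add_cancel_of_le hε1.le
  intro χ hχ
  -- convex combination representation of χ
  rw [convexHull_range_eq_exists_affineCombination] at hχ
  obtain ⟨s, w, hw₀, hw₁, hwx⟩ := hχ
  rw [Finset.affineCombination_eq_linear_combination _ _ _ hw₁] at hwx
  -- Part 1: the decremental condition throughout the hull
  have hdec : ∀ (i : ι) (x : ∀ j : ι, Evec (n j)) (d : Evec (p i)),
      V i (f χ i x d) ≤ ∑ j ∈ insert i (nbr i), γ i j * V j (x j) + ψ * ‖d‖₊ := by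
    intro i x d
    have hlin : f χ i x d = ∑ ν ∈ s, w ν • f (χv ν) i x d := by
      calc f χ i x d = ∑ l : Fin P, χ l • Φ i l x d := haff χ i x d
        _ = ∑ l : Fin P, (∑ ν ∈ s, w ν * χv ν l) • Φ i l x d := by
            rw [← hwx]; simp [Finset.sum_apply]
        _ = ∑ l : Fin P, ∑ ν ∈ s, (w ν * χv ν l) • Φ i l x d := by
            simp [Finset.sum_smul]
        _ = ∑ ν ∈ s, ∑ l : Fin P, (w ν * χv ν l) • Φ i l x d := Finset.sum_comm
        _ = ∑ ν ∈ s, w ν • f (χv ν) i x d := by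
            refine Finset.sum_congr rfl fun ν _ => ?_
            rw [haff, Finset.smul_sum]
            exact Finset.sum_congr rfl fun l _ => (mul_smul _ _ _)
    set R : ℝ≥0 := ∑ j ∈ insert i (nbr i), γ i j * V j (x j) + ψ * ‖d‖₊ with hR
    have key : (V i (f χ i x d) : ℝ) ≤ R := by
      calc (V i (f χ i x d) : ℝ) = (V i (∑ ν ∈ s, w ν • f (χv ν) i x d) : ℝ) := by rw [hlin]
        _ ≤ ∑ ν ∈ s, w ν • (V i (f (χv ν) i x d) : ℝ) :=
            (hconv i).map_sum_le hw₀ hw₁ (fun ν _ => Set.mem_univ _)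
        _ ≤ ∑ ν ∈ s, w ν * (R : ℝ) := by
            refine Finset.sum_le_sum fun ν hν => ?_
            rw [smul_eq_mul]
            exact mul_le_mul_of_nonneg_left (by exact_mod_cast hvertex ν i x d) (hw₀ ν hν)
        _ = R := by rw [← Finset.sum_mul, hw₁, one_mul]
    exact_mod_cast key
  refine ⟨hdec, ?_⟩
  -- Part 2: scalable ISS
  refine ⟨fun S k => g (2 * (q ^ k * α₂ S)), fun C => g (2 * ((ψ / ε + 1) * C)), ?_, ?_, ?_⟩
  · constructor
    · intro k
      refine ⟨hgcont.comp (continuous_const.mul (continuous_const.mul hc2)), ?_, by simp [h02, hg0]⟩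
      intro a b hab
      exact hgstrict (by
        have := hm2 hab
        have hpos : 0 < 2 * q ^ k := by positivity
        calc 2 * (q ^ k * α₂ a) = 2 * q ^ k * α₂ a := by ring
          _ < 2 * q ^ k * α₂ b := mul_lt_mul_of_pos_left this hpos
          _ = 2 * (q ^ k * α₂ b) := by ring)
    · intro S
      have h1 : Tendsto (fun k : ℕ => (q : ℝ≥0) ^ k) atTop (nhds 0) :=
        NNReal.tendsto_pow_atTop_nhds_zero_of_lt_one hq1
      have h2 : Tendsto (fun k : ℕ => 2 * (q ^ k * α₂ S)) atTop (nhds 0) := by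
        have := (h1.mul_const (α₂ S)).const_mul (2 : ℝ≥0)
        simpa using this
      have := (hgcont.tendsto 0).comp h2
      rw [hg0] at this; exact this
  · refine ⟨hgcont.comp (continuous_const.mul (continuous_const.mul continuous_id)), ?_, by simp [hg0]⟩
    intro a b hab
    refine hgstrict ?_
    have hpos : 0 < 2 * (ψ / ε + 1) := by positivity
    calc 2 * ((ψ / ε + 1) * a) = 2 * (ψ / ε + 1) * a := by ring
      _ < 2 * (ψ / ε + 1) * b := mul_lt_mul_of_pos_left hab hpos
      _ = 2 * ((ψ / ε + 1) * b) := by ring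
  · intro x d hx C hC
    set S : ℝ≥0 := Finset.univ.sup fun j => ‖x 0 j‖₊ with hS
    set D : ℝ≥0 := ψ * C / ε with hD
    set Wf : ℕ → ℝ≥0 := fun k => Finset.univ.sup fun j => V j (x k j) with hWf
    have hstep : ∀ k, Wf (k + 1) ≤ q * Wf k + ψ * C := by
      intro k
      refine Finset.sup_le fun i _ => ?_
      rw [hx k i]
      calc V i (f χ i (x k) (d k i))
          ≤ ∑ j ∈ insert i (nbr i), γ i j * V j (x k j) + ψ * ‖d k i‖₊ := hdec i (x k) (d k i)
        _ ≤ ∑ j ∈ insert i (nbr i), γ i j * Wf k + ψ * C := by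
            refine add_le_add (Finset.sum_le_sum fun j _ => ?_) (mul_le_mul_right (hC k i) ψ)
            exact mul_le_mul_right (Finset.le_sup (f := fun j => V j (x k j)) (Finset.mem_univ j)) _
        _ = (∑ j ∈ insert i (nbr i), γ i j) * Wf k + ψ * C := by rw [Finset.sum_mul]
        _ ≤ q * Wf k + ψ * C := by
            exact add_le_add_left (mul_le_mul_left (hsg i) _) _
    have hεD : ε * D = ψ * C := by
      rw [hD, mul_comm, div_mul_cancel₀ _ hε0.ne']
    have hqD : q * D + ψ * C = D := by
      rw [← hεD, ← add_mul, hqε, one_mul]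
    have hWbound : ∀ k, Wf k ≤ q ^ k * Wf 0 + D := by
      intro k
      induction k with
      | zero => simp
      | succ k ih =>
        calc Wf (k + 1) ≤ q * Wf k + ψ * C := hstep k
          _ ≤ q * (q ^ k * Wf 0 + D) + ψ * C := by
              exact add_le_add_left (mul_le_mul_right ih q) _
          _ = q ^ (k + 1) * Wf 0 + (q * D + ψ * C) := by ring
          _ = q ^ (k + 1) * Wf 0 + D := by rw [hqD]
    have hW0 : Wf 0 ≤ α₂ S := by
      refine Finset.sup_le fun j _ => ?_
      exact le_trans (hsandwich j (x 0 j)).2 (hm2.monotone (Finset.le_sup (f := fun j => ‖x 0 j‖₊) (Finset.mem_univ j)))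
    intro k i
    have h1 : α₁ ‖x k i‖₊ ≤ q ^ k * α₂ S + D := by
      calc α₁ ‖x k i‖₊ ≤ V i (x k i) := (hsandwich i (x k i)).1
        _ ≤ Wf k := Finset.le_sup (f := fun j => V j (x k j)) (Finset.mem_univ i)
        _ ≤ q ^ k * Wf 0 + D := hWbound k
        _ ≤ q ^ k * α₂ S + D := add_le_add_left (mul_le_mul_right hW0 _) _
    have h2 : ‖x k i‖₊ ≤ g (q ^ k * α₂ S + D) := by
      calc ‖x k i‖₊ = g (α₁ ‖x k i‖₊) := (hginv _).symm
        _ ≤ g (q ^ k * α₂ S + D) := hgmono h1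
    refine h2.trans ?_
    have hD' : D ≤ (ψ / ε + 1) * C := by
      rw [hD, add_mul, one_mul, div_mul_eq_mul_div]
      exact le_self_add
    rcases le_total (q ^ k * α₂ S) D with h | h
    · calc g (q ^ k * α₂ S + D) ≤ g (2 * D) := by
            refine hgmono ?_
            rw [two_mul]; exact add_le_add_left h _
        _ ≤ g (2 * ((ψ / ε + 1) * C)) := hgmono (mul_le_mul_right hD' 2)
        _ ≤ _ := le_add_self
    · calc g (q ^ k * α₂ S + D) ≤ g (2 * (q ^ k * α₂ S)) := by
            refine hgmono ?_
            rw [two_mul]; exact add_le_add_right h _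
        _ ≤ _ := le_self_add
end
end

section
/- Let ℐ = (𝒩, {ℰ_i}, {f_i}) be an interconnected system containing a subsystem ℐ' = (𝒩', {ℰ'_i}, {f'_i}) with 𝒩' ⊆ 𝒩, whose dynamics are independent of the remaining agents: for every i ∈ 𝒩', ℰ_i ⊆ 𝒩', ℰ'_i = ℰ_i, and f_i(x_i, {x_j}_{j∈ℰ_i}, d_i) = f'_i(x_i, {x_j}_{j∈ℰ'_i}, d_i) for all admissible arguments. Suppose ℐ' admits certificates {V'_i}_{i∈𝒩'} satisfying, for class-𝒦_∞ functions α1, α2, ε ∈ (0,1), ψ ≥ 0, and nonnegative gains with row sums at most 1−ε: α1(|x|₂) ≤ V'_i(x) ≤ α2(|x|₂) and V'_i(f'_i(x_i, {x_j}_{j∈ℰ'_i}, d_i)) ≤ Σ_{j∈ℰ'_i∪{i}} γ_{i,j} V'_j(x_j) + ψ|d_i|₂; and suppose the remaining agents i ∈ 𝒩'' = 𝒩∖𝒩' admit certificates {V''_i} satisfying the same class-𝒦_∞ bounds and decremental inequalities V''_i(f_i(x_i, {x_j}_{j∈ℰ_i}, d_i)) ≤ Σ_{j∈ℰ_i∪{i}}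 γ_{i,j} V''_j(x_j) + ψ|d_i|₂ with the gains for i ∈ 𝒩'' also having row sums at most 1−ε (where for j ∈ 𝒩' one sets V''_j := V'_j). Then the combined family V_i := V'_i for i ∈ 𝒩' and V_i := V''_i for i ∈ 𝒩'' is a vector sISS Lyapunov certificate for the full system ℐ, and hence ℐ is scalably input-to-state stable; i.e., ℐ is sISS decomposable. -/
open scoped NNReal
open Filter

noncomputable section

lemma aux_nnreal_geom (a ε : ℝ≥0) (h0 : ε ≠ 0) (h1 : ε ≤ 1) :
    (1 - ε) * (a / ε) + a = a / ε := by
  nth_rewrite 2 [← div_mul_cancel₀ a h0]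
  rw [mul_comm (a / ε) ε, ← add_mul, tsub_add_cancel_of_le h1, one_mul]


/-- **Sufficient condition for sISS decomposability.** Let `(ι, nbr, f)` be an
interconnected system containing a subsystem on the agent set `S ⊆ ι` whose dynamics
are independent of the remaining agents: for `i ∈ S` we have `nbr i ⊆ S`, and `f i`
depends only on the states of `nbr i ∪ {i}`. If the subsystem is already verified
with certificates `V'` (class-𝒦∞ sandwich bounds, gain row sums at most `1 - ε`, and
the decremental inequality within the subsystem), and the remaining agents `i ∉ S`
admit certificates `V''` satisfying the analogous bounds and decremental inequalities
(where for `j ∈ S` one uses `V' j`), then the combined family (given by `V' i` for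
`i ∈ S` and `V'' i` otherwise) is a vector sISS Lyapunov certificate for the full
system, and hence the full system is scalably input-to-state stable: the system is
sISS decomposable. -/
theorem sISS_decomposable_of_independent_subsystem
    {ι : Type} [Fintype ι] [Nonempty ι] [DecidableEq ι]
    (n p : ι → ℕ) (nbr : ι → Finset ι)
    (f : ∀ i : ι, (∀ j : ι, Evec (n j)) → Evec (p i) → Evec (n i))
    (S : Finset ι)
    -- the subsystem is closed: neighbors of subsystem agents stay in `S`
    (hclosed : ∀ i ∈ S, nbr i ⊆ S)
    -- subsystem dynamics are independent of the remaining agents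
    (hindep : ∀ i ∈ S, ∀ (x y : ∀ j : ι, Evec (n j)) (d : Evec (p i)),
      (∀ j ∈ insert i (nbr i), x j = y j) → f i x d = f i y d)
    (ε : ℝ≥0) (hε0 : 0 < ε) (hε1 : ε < 1) (ψ : ℝ≥0)
    (α₁ α₂ : ℝ≥0 → ℝ≥0) (hα₁ : IsClassKInfty α₁) (hα₂ : IsClassKInfty α₂)
    (γ : ι → ι → ℝ≥0)
    (hsg : ∀ i : ι, ∑ j ∈ insert i (nbr i), γ i j ≤ 1 - ε)
    (V' V'' : ∀ i : ι, Evec (n i) → ℝ≥0)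
    -- the already-verified certificate of the subsystem
    (hsandwich' : ∀ i ∈ S, ∀ x : Evec (n i), α₁ ‖x‖₊ ≤ V' i x ∧ V' i x ≤ α₂ ‖x‖₊)
    (hdec' : ∀ i ∈ S, ∀ (x : ∀ j : ι, Evec (n j)) (d : Evec (p i)),
      V' i (f i x d) ≤ ∑ j ∈ insert i (nbr i), γ i j * V' j (x j) + ψ * ‖d‖₊)
    -- certificates for the remaining agents `𝒩'' = 𝒩 \ 𝒩'`
    (hsandwich'' : ∀ i ∉ S, ∀ x : Evec (n i), α₁ ‖x‖₊ ≤ V'' i x ∧ V'' i x ≤ α₂ ‖x‖₊)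
    (hdec'' : ∀ i ∉ S, ∀ (x : ∀ j : ι, Evec (n j)) (d : Evec (p i)),
      V'' i (f i x d) ≤
        ∑ j ∈ insert i (nbr i),
          γ i j * (if j ∈ S then V' j (x j) else V'' j (x j)) + ψ * ‖d‖₊) :
    -- the combined family is a vector sISS Lyapunov certificate for the full system …
    ((∀ (i : ι) (x : Evec (n i)),
        α₁ ‖x‖₊ ≤ (if i ∈ S then V' i x else V'' i x) ∧
          (if i ∈ S then V' i x else V'' i x) ≤ α₂ ‖x‖₊) ∧
      (∀ (i : ι) (x : ∀ j : ι, Evec (n j)) (d : Evec (p i)),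
        (if i ∈ S then V' i (f i x d) else V'' i (f i x d)) ≤
          ∑ j ∈ insert i (nbr i),
            γ i j * (if j ∈ S then V' j (x j) else V'' j (x j)) + ψ * ‖d‖₊)) ∧
    -- … and hence the full system is scalably input-to-state stable
    (∃ β : ℝ≥0 → ℕ → ℝ≥0, ∃ μ : ℝ≥0 → ℝ≥0, IsClassKL β ∧ IsClassK μ ∧
      ∀ (x : ℕ → ∀ j : ι, Evec (n j)) (d : ℕ → ∀ i : ι, Evec (p i)),
        (∀ (k : ℕ) (i : ι), x (k + 1) i = f i (x k) (d k i)) →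
        ∀ C : ℝ≥0, (∀ (k : ℕ) (i : ι), ‖d k i‖₊ ≤ C) →
        ∀ (k : ℕ) (i : ι),
          ‖x k i‖₊ ≤ β (Finset.univ.sup fun j => ‖x 0 j‖₊) k + μ C) := by
  obtain ⟨⟨hα₁c, hα₁m, hα₁0⟩, hα₁top⟩ := hα₁
  obtain ⟨⟨hα₂c, hα₂m, hα₂0⟩, -⟩ := hα₂
  -- first conjunct: the combined family is a certificate
  have hsand : ∀ (i : ι) (x : Evec (n i)),
      α₁ ‖x‖₊ ≤ (if i ∈ S then V' i x else V'' i x) ∧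
        (if i ∈ S then V' i x else V'' i x) ≤ α₂ ‖x‖₊ := by
    intro i x
    by_cases hi : i ∈ S
    · simpa [hi] using hsandwich' i hi x
    · simpa [hi] using hsandwich'' i hi x
  have hdec : ∀ (i : ι) (x : ∀ j : ι, Evec (n j)) (d : Evec (p i)),
      (if i ∈ S then V' i (f i x d) else V'' i (f i x d)) ≤
        ∑ j ∈ insert i (nbr i),
          γ i j * (if j ∈ S then V' j (x j) else V'' j (x j)) + ψ * ‖d‖₊ := by
    intro i x d
    by_cases hi : i ∈ S
    · simp only [if_pos hi]
      have hsum : ∑ j ∈ insert i (nbr i),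
          γ i j * (if j ∈ S then V' j (x j) else V'' j (x j)) =
          ∑ j ∈ insert i (nbr i), γ i j * V' j (x j) := by
        refine Finset.sum_congr rfl fun j hj => ?_
        rcases Finset.mem_insert.mp hj with h | h
        · rw [if_pos (h ▸ hi)]
        · rw [if_pos (hclosed i hi h)]
      rw [hsum]
      exact hdec' i hi x d
    · simp only [if_neg hi]
      exact hdec'' i hi x d
  refine ⟨⟨hsand, hdec⟩, ?_⟩
  -- inverse of α₁
  have hsurj : Function.Surjective α₁ := by
    intro y
    obtain ⟨z, hz⟩ := (hα₁top.eventually_ge_atTop y).exists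
    obtain ⟨w, -, hw⟩ := intermediate_value_Icc (zero_le : 0 ≤ z) hα₁c.continuousOn
      ⟨hα₁0.le.trans (zero_le : 0 ≤ y), hz⟩
    exact ⟨w, hw⟩
  set e : ℝ≥0 ≃o ℝ≥0 := StrictMono.orderIsoOfSurjective α₁ hα₁m hsurj with he
  have hecont : Continuous e.symm := e.symm.toHomeomorph.continuous
  have hse : ∀ a, e.symm (α₁ a) = a := fun a =>
    StrictMono.orderIsoOfSurjective_symm_apply_self α₁ hα₁m hsurj a
  have hesymm0 : e.symm 0 = 0 := by
    have := hse 0; rwa [hα₁0] at this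
  have hinv_le : ∀ {a b : ℝ≥0}, α₁ b ≤ a → b ≤ e.symm a := by
    intro a b hba
    have := e.symm.monotone hba
    rwa [hse] at this
  have hsplit : ∀ a b : ℝ≥0, e.symm (a + b) ≤ e.symm (2 * a) + e.symm (2 * b) := by
    intro a b
    rcases le_total a b with h | h
    · have hab : a + b ≤ 2 * b := by rw [two_mul]; exact add_le_add_left h b
      exact (e.symm.monotone hab).trans (le_add_self)
    · have hab : a + b ≤ 2 * a := by rw [two_mul]; exact add_le_add_right h a
      exact (e.symm.monotone hab).trans (le_self_add)
  have h1ε : (0 : ℝ≥0) < 1 - ε := tsub_pos_of_lt hε1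
  have h1ε1 : (1 : ℝ≥0) - ε < 1 := tsub_lt_self one_pos hε0
  refine ⟨fun s k => e.symm (2 * (1 - ε) ^ k * α₂ s),
    fun C => e.symm (2 * (ψ / ε) * C + C), ⟨?_, ?_⟩, ⟨?_, ?_, ?_⟩, ?_⟩
  · -- each β · k is class K
    intro k
    refine ⟨hecont.comp (continuous_const.mul hα₂c), ?_, ?_⟩
    · intro s t hst
      exact e.symm.strictMono (mul_lt_mul_of_pos_left (hα₂m hst)
        (mul_pos two_pos (pow_pos h1ε k)))
    · show e.symm _ = 0
      rw [hα₂0, mul_zero, hesymm0]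
  · -- β s · tends to 0
    intro s
    have hpow := NNReal.tendsto_pow_atTop_nhds_zero_of_lt_one h1ε1
    have h2 : Tendsto (fun k => 2 * (1 - ε) ^ k * α₂ s) atTop (nhds 0) := by
      simpa using (hpow.const_mul (2 : ℝ≥0)).mul_const (α₂ s)
    have := (hecont.tendsto 0).comp h2
    rwa [Function.comp_def, hesymm0] at this
  · exact hecont.comp ((continuous_const.mul continuous_id).add continuous_id)
  · intro a b hab
    exact e.symm.strictMono (add_lt_add_of_le_of_lt (mul_le_mul_right hab.le _) hab)
  · show e.symm _ = 0
    rw [mul_zero, add_zero, hesymm0]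
  -- the trajectory estimate
  intro x d hdyn C hC
  set W : ∀ i : ι, Evec (n i) → ℝ≥0 :=
    fun i z => if i ∈ S then V' i z else V'' i z with hWdef
  set M : ℕ → ℝ≥0 := fun k => Finset.univ.sup fun i => W i (x k i) with hM
  have hWM : ∀ k i, W i (x k i) ≤ M k := fun k i => Finset.le_sup (f := fun j => W j (x k j)) (Finset.mem_univ i)
  have hstep : ∀ k, M (k + 1) ≤ (1 - ε) * M k + ψ * C := by
    intro k
    refine Finset.sup_le fun i _ => ?_
    rw [hdyn k i]
    calc W i (f i (x k) (d k i))
        ≤ ∑ j ∈ insert i (nbr i), γ i j * W j (x k j) + ψ * ‖d k i‖₊ :=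
          hdec i (x k) (d k i)
      _ ≤ ∑ j ∈ insert i (nbr i), γ i j * M k + ψ * C :=
          add_le_add (Finset.sum_le_sum fun j _ => mul_le_mul_right (hWM k j) _)
            (mul_le_mul_right (hC k i) ψ)
      _ = (∑ j ∈ insert i (nbr i), γ i j) * M k + ψ * C := by rw [Finset.sum_mul]
      _ ≤ (1 - ε) * M k + ψ * C := add_le_add_left (mul_le_mul_left (hsg i) _) _
  have hiter : ∀ k, M k ≤ (1 - ε) ^ k * M 0 + ψ * C / ε := by
    intro k
    induction k with
    | zero => simpa using le_self_add
    | succ k ih =>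
      calc M (k + 1) ≤ (1 - ε) * M k + ψ * C := hstep k
        _ ≤ (1 - ε) * ((1 - ε) ^ k * M 0 + ψ * C / ε) + ψ * C := by gcongr
        _ = (1 - ε) ^ (k + 1) * M 0 + ((1 - ε) * (ψ * C / ε) + ψ * C) := by ring
        _ = (1 - ε) ^ (k + 1) * M 0 + ψ * C / ε := by
            rw [aux_nnreal_geom (ψ * C) ε hε0.ne' hε1.le]
  have hM0 : M 0 ≤ α₂ (Finset.univ.sup fun j => ‖x 0 j‖₊) :=
    Finset.sup_le fun i _ => le_trans (hsand i (x 0 i)).2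
      (hα₂m.monotone (Finset.le_sup (f := fun j => ‖x 0 j‖₊) (Finset.mem_univ i)))
  intro k i
  have h1 : α₁ ‖x k i‖₊ ≤ (1 - ε) ^ k * α₂ (Finset.univ.sup fun j => ‖x 0 j‖₊) + ψ * C / ε :=
    le_trans (hsand i (x k i)).1 <| (hWM k i).trans <| (hiter k).trans (by gcongr)
  refine (hinv_le h1).trans ((hsplit _ _).trans (add_le_add ?_ ?_))
  · exact le_of_eq (by simp [mul_assoc])
  · refine e.symm.monotone ?_
    have : 2 * (ψ * C / ε) = 2 * (ψ / ε) * C := by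
      rw [mul_assoc, div_mul_eq_mul_div]
    rw [this]
    exact le_self_add
end
end

section
/- Consider a discrete-time interconnected system with control inputs, x_{i,k+1} = f_i(x_{i,k}, {x_{j,k}}_{j∈ℰ_i}, u_{i,k}, d_{i,k}), closed with locally Lipschitz feedback laws u_{i,k} = π_i(x_{i,k}, {x_{j,k}}_{j∈ℰ_i}). Suppose there exist ε ∈ (0,1), ψ ≥ 0, class-𝒦_∞ functions α1, α2, nonnegative gains γ_{i,j} with max_{i∈𝒩} Σ_{j∈ℰ_i∪{i}} γ_{i,j} ≤ 1−ε, and functions V_i : ℝ^{n_i} → [0,∞) such that α1(|x|₂) ≤ V_i(x) ≤ α2(|x|₂) and, for all admissible states and disturbances, V_i(f_i(x_i, {x_j}_{j∈ℰ_i}, π_i(x_i, {x_j}_{j∈ℰ_i}), d_i)) ≤ Σ_{j∈ℰ_i∪{i}} γ_{i,j} V_j(x_j) + ψ|d_i|₂. Then the closed-loop interconnected system is scalably input-to-state stable. -/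
open scoped NNReal
open Filter

noncomputable section

/-- **Closed-loop sISS from a vector control Lyapunov certificate.** A discrete-time
interconnected system with control inputs `x_{i,k+1} = f i (x_k, u_{i,k}, d_{i,k})`,
closed with locally Lipschitz feedback laws `u_{i,k} = π i (x_k)`, admitting functions
`V i` with class-𝒦∞ sandwich bounds, small-gain row sums at most `1 - ε`, and the
closed-loop decremental inequality for all admissible states and disturbances, is
scalably input-to-state stable. -/
theorem closed_loop_sISS_of_vector_control_lyapunov
    {ι : Type} [Fintype ι] [Nonempty ι] [DecidableEq ι]
    (n p q : ι → ℕ) (nbr : ι → Finset ι)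
    (f : ∀ i : ι, (∀ j : ι, Evec (n j)) → Evec (q i) → Evec (p i) → Evec (n i))
    (π : ∀ i : ι, (∀ j : ι, Evec (n j)) → Evec (q i))
    (hπ : ∀ i : ι, LocallyLipschitz (π i))
    (ε : ℝ≥0) (hε0 : 0 < ε) (hε1 : ε < 1) (ψ : ℝ≥0)
    (α₁ α₂ : ℝ≥0 → ℝ≥0) (hα₁ : IsClassKInfty α₁) (hα₂ : IsClassKInfty α₂)
    (γ : ι → ι → ℝ≥0)
    (hsg : ∀ i : ι, ∑ j ∈ insert i (nbr i), γ i j ≤ 1 - ε)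
    (V : ∀ i : ι, Evec (n i) → ℝ≥0)
    (hsandwich : ∀ (i : ι) (x : Evec (n i)), α₁ ‖x‖₊ ≤ V i x ∧ V i x ≤ α₂ ‖x‖₊)
    (hdec : ∀ (i : ι) (x : ∀ j : ι, Evec (n j)) (d : Evec (p i)),
      V i (f i x (π i x) d) ≤
        ∑ j ∈ insert i (nbr i), γ i j * V j (x j) + ψ * ‖d‖₊) :
    ∃ β : ℝ≥0 → ℕ → ℝ≥0, ∃ μ : ℝ≥0 → ℝ≥0, IsClassKL β ∧ IsClassK μ ∧
      ∀ (x : ℕ → ∀ j : ι, Evec (n j)) (d : ℕ → ∀ i : ι, Evec (p i)),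
        (∀ (k : ℕ) (i : ι), x (k + 1) i = f i (x k) (π i (x k)) (d k i)) →
        ∀ C : ℝ≥0, (∀ (k : ℕ) (i : ι), ‖d k i‖₊ ≤ C) →
        ∀ (k : ℕ) (i : ι),
          ‖x k i‖₊ ≤ β (Finset.univ.sup fun j => ‖x 0 j‖₊) k + μ C := by
  classical
  obtain ⟨⟨hc1, hm1, hz1⟩, ht1⟩ := hα₁
  obtain ⟨⟨hc2, hm2, hz2⟩, ht2⟩ := hα₂
  -- `α₁` is surjective
  have hsurj : Function.Surjective α₁ := by
    intro y
    obtain ⟨b, hb⟩ := (tendsto_atTop.1 ht1 y).exists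
    obtain ⟨t, _, ht⟩ :=
      intermediate_value_Icc (zero_le : (0:ℝ≥0) ≤ b) hc1.continuousOn ⟨by simp [hz1], hb⟩
    exact ⟨t, ht⟩
  set e : ℝ≥0 ≃o ℝ≥0 := StrictMono.orderIsoOfSurjective α₁ hm1 hsurj with he
  set g : ℝ≥0 → ℝ≥0 := fun t => e.symm t with hgdef
  have hge : ∀ t, g (α₁ t) = t := fun t =>
    StrictMono.orderIsoOfSurjective_symm_apply_self α₁ hm1 hsurj t
  have hg0 : g 0 = 0 := by
    have := hge 0
    rwa [hz1] at this
  have hgmono : Monotone g := e.symm.monotone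
  have hgsm : StrictMono g := e.symm.strictMono
  have hgcont : Continuous g := e.symm.toHomeomorph.continuous
  -- split lemma
  have hsplit : ∀ a b : ℝ≥0, g (a + b) ≤ g (2 * a) + g (2 * b) := by
    intro a b
    rcases le_total a b with h | h
    · calc g (a + b) ≤ g (2 * b) := hgmono (by rw [two_mul]; exact add_le_add_left h b)
        _ ≤ g (2 * a) + g (2 * b) := le_add_self
    · calc g (a + b) ≤ g (2 * a) := hgmono (by rw [two_mul]; exact add_le_add_right h a)
        _ ≤ g (2 * a) + g (2 * b) := le_self_add
  set r : ℝ≥0 := 1 - ε with hrdef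
  have hr0 : 0 < r := tsub_pos_of_lt hε1
  have hr1 : r < 1 := tsub_lt_self one_pos hε0
  have hre : r + ε = 1 := tsub_add_cancel_of_le hε1.le
  refine ⟨fun s k => g (2 * (r ^ k * α₂ s)), fun c => g (2 * (ψ * c / ε)) + c, ?_, ?_, ?_⟩
  · constructor
    · intro k
      refine ⟨hgcont.comp (continuous_const.mul (continuous_const.mul hc2)), ?_, ?_⟩
      · intro a b hab
        exact hgsm (mul_lt_mul_of_pos_left
          (mul_lt_mul_of_pos_left (hm2 hab) (pow_pos hr0 k)) two_pos)
      · simp [hz2, hg0]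
    · intro s
      have h1 : Tendsto (fun k : ℕ => 2 * (r ^ k * α₂ s)) atTop (nhds 0) := by
        have := (NNReal.tendsto_pow_atTop_nhds_zero_of_lt_one hr1).mul_const (α₂ s)
        have := this.const_mul (2 : ℝ≥0)
        simpa using this
      have := (hgcont.tendsto 0).comp h1
      simpa [hg0, Function.comp_def] using this
  · refine ⟨(hgcont.comp (continuous_const.mul ((continuous_const.mul continuous_id).div_const ε))).add continuous_id, ?_, ?_⟩
    · have hmono : Monotone fun c => g (2 * (ψ * c / ε)) := by
        intro a b hab
        exact hgmono (by gcongr)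
      exact hmono.add_strictMono strictMono_id
    · simp [hg0]
  · intro x d hdyn C hC k i
    set M : ℝ≥0 := Finset.univ.sup fun j => ‖x 0 j‖₊ with hM
    -- key Lyapunov estimate
    have hW : ∀ k, (Finset.univ.sup fun j => V j (x k j)) ≤ r ^ k * α₂ M + ψ * C / ε := by
      intro k
      induction k with
      | zero =>
        refine le_trans ?_ le_self_add
        simp only [pow_zero, one_mul]
        refine Finset.sup_le fun j _ => (hsandwich j _).2.trans ?_
        exact hm2.monotone (Finset.le_sup (f := fun j => ‖x 0 j‖₊) (Finset.mem_univ j))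
      | succ k ih =>
        refine Finset.sup_le fun i _ => ?_
        rw [hdyn k i]
        refine (hdec i (x k) (d k i)).trans ?_
        have hstep : ∑ j ∈ insert i (nbr i), γ i j * V j (x k j) + ψ * ‖d k i‖₊ ≤
            r * (Finset.univ.sup fun j => V j (x k j)) + ψ * C := by
          gcongr with j hj
          · calc ∑ j ∈ insert i (nbr i), γ i j * V j (x k j)
                ≤ ∑ j ∈ insert i (nbr i), γ i j * (Finset.univ.sup fun j => V j (x k j)) := by
                  gcongr with j hj
                  exact Finset.le_sup (f := fun j => V j (x k j)) (Finset.mem_univ j)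
              _ = (∑ j ∈ insert i (nbr i), γ i j) * (Finset.univ.sup fun j => V j (x k j)) := by
                  rw [Finset.sum_mul]
              _ ≤ r * (Finset.univ.sup fun j => V j (x k j)) := by
                  gcongr; exact hsg i
          · exact hC k i
        refine hstep.trans ?_
        have h2 : r * (Finset.univ.sup fun j => V j (x k j)) + ψ * C ≤
            r * (r ^ k * α₂ M + ψ * C / ε) + ψ * C := by gcongr
        refine h2.trans ?_
        have hcalc : r * (ψ * C / ε) + ψ * C = ψ * C / ε := by
          have hne : ε ≠ 0 := hε0.ne'
          rw [eq_div_iff hne, add_mul, mul_assoc, div_mul_cancel₀ _ hne,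
            mul_comm (ψ * C) ε, ← add_mul, hre, one_mul]
        calc r * (r ^ k * α₂ M + ψ * C / ε) + ψ * C
            = r ^ (k + 1) * α₂ M + (r * (ψ * C / ε) + ψ * C) := by ring
          _ = r ^ (k + 1) * α₂ M + ψ * C / ε := by rw [hcalc]
          _ ≤ r ^ (k + 1) * α₂ M + ψ * C / ε := le_rfl
    -- conclude
    have h1 : ‖x k i‖₊ ≤ g (V i (x k i)) := by
      calc ‖x k i‖₊ = g (α₁ ‖x k i‖₊) := (hge _).symm
        _ ≤ g (V i (x k i)) := hgmono (hsandwich i _).1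
    calc ‖x k i‖₊ ≤ g (V i (x k i)) := h1
      _ ≤ g (r ^ k * α₂ M + ψ * C / ε) :=
          hgmono ((Finset.le_sup (f := fun j => V j (x k j)) (Finset.mem_univ i)).trans (hW k))
      _ ≤ g (2 * (r ^ k * α₂ M)) + g (2 * (ψ * C / ε)) := hsplit _ _
      _ ≤ g (2 * (r ^ k * α₂ M)) + (g (2 * (ψ * C / ε)) + C) := by
          exact add_le_add_right le_self_add _
end
end

section
/- Let ℬ ⊆ ℝ^p be the convex hull of finitely many parameter vectors {χ^ν}. Consider an interconnected system with control-affine, parameter-affine dynamics: for z_{i,k} = (x_{i,k}, {x_{j,k}}_{j∈ℰ_i}, d_{i,k}), x_{i,k+1} = h_i(z_{i,k}; χ) + g_i(z_{i,k}; χ) u_{i,k} = Σ_{l=1}^p χ_l (Φ^h_{i,l}(z_{i,k}) + Φ^g_{i,l}(z_{i,k}) u_{i,k}), where all Φ^h_{i,l}, Φ^g_{i,l} are independent of χ, and the control u_{i,k} is determined by a χ-independent feedback law. Assume each V_i : ℝ^{n_i} → [0,∞) is convex. Suppose there exist ψ ≥ 0 and nonnegative gains γ_{i,j} satisfying the small-gain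 condition max_{i∈𝒩} Σ_{j∈ℰ_i∪{i}} γ_{i,j} ≤ 1−ε for some ε ∈ (0,1), such that for every vertex χ^ν and all admissible states, controls given by the feedback law, and disturbances, V_i(x_{i,k+1}(χ^ν)) ≤ Σ_{j∈ℰ_i∪{i}} γ_{i,j} V_j(x_{j,k}) + ψ|d_{i,k}|₂ for all i ∈ 𝒩. Then for every χ ∈ ℬ the same decremental inequality holds with the same {V_i}, and (given class-𝒦_∞ sandwich bounds on the V_i) the closed-loop interconnected system is scalably input-to-state stable for every χ ∈ ℬ. -/
open scoped NNReal
open Filter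

noncomputable section

/-- **sISS with control-affine, parameter-affine dynamics (closed loop).** Let
`ℬ ⊆ ℝ^P` be the convex hull of finitely many parameter vectors `χv ν`, and let the
dynamics be control-affine and affine in the parameter:
`f χ i x u d = Σ_l χ l • (Φh i l x d + Φg i l x d u)` with `Φh, Φg` independent of
`χ`, closed by a `χ`-independent feedback law `π`. Assume each `V i` is convex, there
are `ψ ≥ 0` and nonnegative gains with small-gain row sums at most `1 - ε` such that
the closed-loop decremental condition holds at every vertex `χv ν` for all admissible
states and disturbances, and the `V i` satisfy class-𝒦∞ sandwich bounds. Then for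
every `χ ∈ ℬ` the same decremental inequality holds with the same `V`, and the
closed-loop interconnected system is scalably input-to-state stable for every
`χ ∈ ℬ`. -/
theorem sISS_control_affine_parameter_affine_closed_loop
    {ι : Type} [Fintype ι] [Nonempty ι] [DecidableEq ι]
    {Ω : Type} [Fintype Ω] [Nonempty Ω]
    (n q p : ι → ℕ) (nbr : ι → Finset ι)
    (P : ℕ) (χv : Ω → (Fin P → ℝ))
    (Φh : ∀ i : ι, Fin P → (∀ j : ι, Evec (n j)) → Evec (p i) → Evec (n i))
    (Φg : ∀ i : ι, Fin P → (∀ j : ι, Evec (n j)) → Evec (p i) →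
      (Evec (q i) →L[ℝ] Evec (n i)))
    (f : (Fin P → ℝ) → ∀ i : ι,
      (∀ j : ι, Evec (n j)) → Evec (q i) → Evec (p i) → Evec (n i))
    (haff : ∀ (χ : Fin P → ℝ) (i : ι) (x : ∀ j : ι, Evec (n j)) (u : Evec (q i))
        (d : Evec (p i)),
      f χ i x u d = ∑ l : Fin P, χ l • (Φh i l x d + Φg i l x d u))
    (π : ∀ i : ι, (∀ j : ι, Evec (n j)) → Evec (q i))
    (ε : ℝ≥0) (hε0 : 0 < ε) (hε1 : ε < 1) (ψ : ℝ≥0)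
    (α₁ α₂ : ℝ≥0 → ℝ≥0) (hα₁ : IsClassKInfty α₁) (hα₂ : IsClassKInfty α₂)
    (γ : ι → ι → ℝ≥0)
    (hsg : ∀ i : ι, ∑ j ∈ insert i (nbr i), γ i j ≤ 1 - ε)
    (V : ∀ i : ι, Evec (n i) → ℝ≥0)
    (hconv : ∀ i : ι, ConvexOn ℝ Set.univ fun x : Evec (n i) => (V i x : ℝ))
    (hsandwich : ∀ (i : ι) (x : Evec (n i)), α₁ ‖x‖₊ ≤ V i x ∧ V i x ≤ α₂ ‖x‖₊)
    (hvertex : ∀ (ν : Ω) (i : ι) (x : ∀ j : ι, Evec (n j)) (d : Evec (p i)),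
      V i (f (χv ν) i x (π i x) d) ≤
        ∑ j ∈ insert i (nbr i), γ i j * V j (x j) + ψ * ‖d‖₊) :
    ∀ χ ∈ convexHull ℝ (Set.range χv),
      -- the closed-loop decremental condition holds throughout the hull …
      (∀ (i : ι) (x : ∀ j : ι, Evec (n j)) (d : Evec (p i)),
        V i (f χ i x (π i x) d) ≤
          ∑ j ∈ insert i (nbr i), γ i j * V j (x j) + ψ * ‖d‖₊) ∧
      -- … and the closed-loop system with parameter `χ` is sISS
      (∃ β : ℝ≥0 → ℕ → ℝ≥0, ∃ μ : ℝ≥0 → ℝ≥0, IsClassKL β ∧ IsClassK μ ∧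
        ∀ (x : ℕ → ∀ j : ι, Evec (n j)) (d : ℕ → ∀ i : ι, Evec (p i)),
          (∀ (k : ℕ) (i : ι), x (k + 1) i = f χ i (x k) (π i (x k)) (d k i)) →
          ∀ C : ℝ≥0, (∀ (k : ℕ) (i : ι), ‖d k i‖₊ ≤ C) →
          ∀ (k : ℕ) (i : ι),
            ‖x k i‖₊ ≤ β (Finset.univ.sup fun j => ‖x 0 j‖₊) k + μ C) := by
  intro χ hχ
  -- Part 1: decremental condition throughout the hull, by convexity
  have hdec : ∀ (i : ι) (x : ∀ j : ι, Evec (n j)) (d : Evec (p i)),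
      V i (f χ i x (π i x) d) ≤
        ∑ j ∈ insert i (nbr i), γ i j * V j (x j) + ψ * ‖d‖₊ := by
    have hsub : convexHull ℝ (Set.range χv) ⊆
        {c : Fin P → ℝ | ∀ (i : ι) (x : ∀ j : ι, Evec (n j)) (d : Evec (p i)),
          V i (f c i x (π i x) d) ≤
            ∑ j ∈ insert i (nbr i), γ i j * V j (x j) + ψ * ‖d‖₊} := by
      apply convexHull_min
      · rintro _ ⟨ν, rfl⟩
        exact fun i x d => hvertex ν i x d
      · rintro c₁ h₁ c₂ h₂ a b ha hb hab i x d
        have hf : f (a • c₁ + b • c₂) i x (π i x) d =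
            a • f c₁ i x (π i x) d + b • f c₂ i x (π i x) d := by
          simp only [haff]
          rw [Finset.smul_sum, Finset.smul_sum, ← Finset.sum_add_distrib]
          refine Finset.sum_congr rfl fun l _ => ?_
          simp only [Pi.add_apply, Pi.smul_apply, smul_eq_mul, add_smul,
            mul_smul, smul_add]
          abel
        rw [hf, ← NNReal.coe_le_coe]
        set S : ℝ≥0 := ∑ j ∈ insert i (nbr i), γ i j * V j (x j) + ψ * ‖d‖₊ with hS
        calc (V i (a • f c₁ i x (π i x) d + b • f c₂ i x (π i x) d) : ℝ)
            ≤ a * V i (f c₁ i x (π i x) d) + b * V i (f c₂ i x (π i x) d) :=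
              (hconv i).2 (Set.mem_univ _) (Set.mem_univ _) ha hb hab
          _ ≤ a * S + b * S := by
              gcongr
              · exact_mod_cast h₁ i x d
              · exact_mod_cast h₂ i x d
          _ = S := by rw [← add_mul, hab, one_mul]
    exact hsub hχ
  refine ⟨hdec, ?_⟩
  -- Part 2: construct β and μ using the inverse of α₁
  obtain ⟨⟨hα₁c, hα₁m, hα₁0⟩, hα₁t⟩ := hα₁
  obtain ⟨⟨hα₂c, hα₂m, hα₂0⟩, hα₂t⟩ := hα₂
  have hsurj : Function.Surjective α₁ := by
    intro y
    obtain ⟨x₀, hx₀⟩ := (hα₁t.eventually_ge_atTop y).exists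
    have hy : y ∈ Set.Icc (α₁ 0) (α₁ x₀) := ⟨by simp [hα₁0], hx₀⟩
    obtain ⟨x, _, hx⟩ := intermediate_value_Icc (zero_le : 0 ≤ x₀) hα₁c.continuousOn hy
    exact ⟨x, hx⟩
  set σ : ℝ≥0 ≃o ℝ≥0 := StrictMono.orderIsoOfSurjective α₁ hα₁m hsurj with hσ
  set g : ℝ≥0 → ℝ≥0 := fun y => σ.symm y with hg
  have hgα : ∀ y, g (α₁ y) = y := fun y =>
    StrictMono.orderIsoOfSurjective_symm_apply_self α₁ hα₁m hsurj y
  have hg0 : g 0 = 0 := by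
    have := hgα 0
    rwa [hα₁0] at this
  have hgmono : StrictMono g := σ.symm.strictMono
  have hgc : Continuous g := σ.symm.continuous
  set r : ℝ≥0 := 1 - ε with hr
  have hr1 : r < 1 := tsub_lt_self one_pos hε0
  have hr0 : 0 < r := tsub_pos_of_lt hε1
  refine ⟨fun s k => g (2 * r ^ k * α₂ s), fun C => g (2 * ψ / ε * C) + C, ?_, ?_, ?_⟩
  · constructor
    · intro k
      refine ⟨hgc.comp (by fun_prop), ?_, by simp [hα₂0, hg0]⟩
      intro a b hab
      exact hgmono (by
        have : (0:ℝ≥0) < 2 * r ^ k := by positivity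
        exact (mul_lt_mul_iff_right₀ this).2 (hα₂m hab))
    · intro s
      have h1 : Tendsto (fun k : ℕ => 2 * r ^ k * α₂ s) atTop (nhds 0) := by
        have := (NNReal.tendsto_pow_atTop_nhds_zero_of_lt_one hr1).const_mul (2:ℝ≥0)
        have := this.mul_const (α₂ s)
        simpa using this
      have := (hgc.tendsto 0).comp h1
      simpa [Function.comp_def, hg0] using this
  · refine ⟨(hgc.comp (by fun_prop)).add continuous_id, ?_, by simp [hg0]⟩
    intro a b hab
    exact add_lt_add_of_le_of_lt (hgmono.monotone (mul_le_mul_right hab.le _)) hab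
  · intro x d hdyn C hC k i
    set M : ℝ≥0 := Finset.univ.sup fun j => ‖x 0 j‖₊ with hM
    set W : ℕ → ℝ≥0 := fun k => Finset.univ.sup fun i => V i (x k i) with hW
    have hstep : ∀ k, W (k + 1) ≤ r * W k + ψ * C := by
      intro m
      refine Finset.sup_le fun i _ => ?_
      rw [hdyn m i]
      calc V i (f χ i (x m) (π i (x m)) (d m i))
          ≤ ∑ j ∈ insert i (nbr i), γ i j * V j (x m j) + ψ * ‖d m i‖₊ :=
            hdec i (x m) (d m i)
        _ ≤ ∑ j ∈ insert i (nbr i), γ i j * W m + ψ * C := by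
            gcongr with j hj
            · exact Finset.le_sup (f := fun i => V i (x m i)) (Finset.mem_univ j)
            · exact hC m i
        _ = (∑ j ∈ insert i (nbr i), γ i j) * W m + ψ * C := by
            rw [Finset.sum_mul]
        _ ≤ r * W m + ψ * C := by gcongr; exact hsg i
    have hWk : ∀ k, W k ≤ r ^ k * W 0 + ψ * C / ε := by
      intro k
      induction k with
      | zero => simpa using le_self_add
      | succ m ih =>
        calc W (m + 1) ≤ r * W m + ψ * C := hstep m
          _ ≤ r * (r ^ m * W 0 + ψ * C / ε) + ψ * C := by gcongr
          _ = r ^ (m + 1) * W 0 + (r * (ψ * C / ε) + ψ * C) := by ring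
          _ = r ^ (m + 1) * W 0 + ψ * C / ε := by
              congr 1
              have h1 : ε * (ψ * C / ε) = ψ * C := by
                rw [mul_comm]; exact div_mul_cancel₀ _ hε0.ne'
              calc r * (ψ * C / ε) + ψ * C
                  = r * (ψ * C / ε) + ε * (ψ * C / ε) := by rw [h1]
                _ = (r + ε) * (ψ * C / ε) := (add_mul _ _ _).symm
                _ = 1 * (ψ * C / ε) := by rw [hr, tsub_add_cancel_of_le hε1.le]
                _ = ψ * C / ε := one_mul _
    have hbound : α₁ ‖x k i‖₊ ≤ r ^ k * α₂ M + ψ * C / ε := by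
      calc α₁ ‖x k i‖₊ ≤ V i (x k i) := (hsandwich i _).1
        _ ≤ W k := Finset.le_sup (f := fun i => V i (x k i)) (Finset.mem_univ i)
        _ ≤ r ^ k * W 0 + ψ * C / ε := hWk k
        _ ≤ r ^ k * α₂ M + ψ * C / ε := by
            gcongr
            refine Finset.sup_le fun j _ => ?_
            exact (hsandwich j _).2.trans (hα₂m.monotone
              (Finset.le_sup (f := fun j => ‖x 0 j‖₊) (Finset.mem_univ j)))
    set A : ℝ≥0 := r ^ k * α₂ M with hA
    set B : ℝ≥0 := ψ * C / ε with hB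
    have hx : ‖x k i‖₊ ≤ g (A + B) := by
      have := hgmono.monotone hbound
      rwa [hgα] at this
    have hsplit : g (A + B) ≤ g (2 * A) + g (2 * B) := by
      rcases le_total A B with h | h
      · have : A + B ≤ 2 * B := by rw [two_mul]; exact add_le_add_left h B
        exact (hgmono.monotone this).trans le_add_self
      · have : A + B ≤ 2 * A := by rw [two_mul]; exact add_le_add_right h A
        exact (hgmono.monotone this).trans le_self_add
    refine hx.trans (hsplit.trans (add_le_add ?_ ?_))
    · show g (2 * (r ^ k * α₂ M)) ≤ g (2 * r ^ k * α₂ M)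
      rw [mul_assoc]
    · show g (2 * (ψ * C / ε)) ≤ g (2 * ψ / ε * C) + C
      have he : 2 * (ψ * C / ε) = 2 * ψ / ε * C := by
        rw [div_mul_eq_mul_div, ← mul_div_assoc, mul_assoc]
      rw [he]
      exact le_self_add
end
end
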